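/- Let a ∈ ℝ^d with a ≠ 0 and let f : ℝ^d → ℝ be given by f(x) = log(1 + exp(−⟨a, x⟩)). Then inf f = 0 and for every x ∈ ℝ^d: ⟨∇f(x), ∇²f(x)∇f(x)⟩ / ‖∇f(x)‖² ≤ (2/(3√3))·‖a‖²·√(f(x)). -/

import Mathlib

open scoped RealInnerProductSpace

private noncomputable def Lfun (t : ℝ) : ℝ := Real.log (1 + Real.exp (-t))
private noncomputable def Lg (t : ℝ) : ℝ := -(Real.exp (-t) / (1 + Real.exp (-t)))
private noncomputable def Lg' (t : ℝ) : ℝ := Real.exp (-t) / (1 + Real.exp (-t)) ^ 2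

private lemma hden_pos (t : ℝ) : (0:ℝ) < 1 + Real.exp (-t) := by positivity

private lemma hasDerivAt_Lfun (t : ℝ) : HasDerivAt Lfun (Lg t) t := by
  have h1 : HasDerivAt (fun t : ℝ => 1 + Real.exp (-t)) (-Real.exp (-t)) t := by
    have h := ((Real.hasDerivAt_exp (-t)).comp t (hasDerivAt_neg t)).const_add (1:ℝ)
    simpa using h
  have h2 := h1.log (ne_of_gt (hden_pos t))
  rw [show Lfun = fun y => Real.log (1 + Real.exp (-y)) from rfl]
  simpa [Lg, neg_div] using h2

private lemma hasDerivAt_Lg (t : ℝ) : HasDerivAt Lg (Lg' t) t := by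
  have hexp : HasDerivAt (fun t : ℝ => Real.exp (-t)) (-Real.exp (-t)) t := by
    simpa [Function.comp_def] using (Real.hasDerivAt_exp (-t)).comp t (hasDerivAt_neg t)
  have hden : HasDerivAt (fun t : ℝ => 1 + Real.exp (-t)) (-Real.exp (-t)) t := by
    simpa using hexp.const_add (1:ℝ)
  have h := (hexp.div hden (ne_of_gt (hden_pos t))).neg
  convert h using 1
  · rfl
  · rfl
  · rfl
  have hne := ne_of_gt (hden_pos t)
  simp only [Lg']
  field_simp
  ring

private lemma key_scalar (t : ℝ) :
    Lg' t ≤ (2 / (3 * Real.sqrt 3)) * Real.sqrt (Real.log (1 + Real.exp (-t))) := by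
  have hd := hden_pos t
  have hdne : (1 + Real.exp (-t)) ≠ 0 := ne_of_gt hd
  set u : ℝ := Real.exp (-t) / (1 + Real.exp (-t)) with hu
  have hu0 : 0 < u := by positivity
  have hu1 : u < 1 := by
    rw [hu, div_lt_one hd]; linarith [Real.exp_pos (-t)]
  have hLg' : Lg' t = u * (1 - u) := by
    rw [Lg', hu]; field_simp; ring
  -- u ≤ log(1 + exp(-t))
  have hflog : u ≤ Real.log (1 + Real.exp (-t)) := by
    have h1 : Real.log (1 - u) ≤ -u := by
      have := Real.log_le_sub_one_of_pos (x := 1 - u) (by linarith)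
      linarith
    have h2 : (1 - u) = (1 + Real.exp (-t))⁻¹ := by
      rw [hu]; field_simp; ring
    have h3 : Real.log (1 - u) = -Real.log (1 + Real.exp (-t)) := by
      rw [h2, Real.log_inv]
    linarith [h3 ▸ h1]
  have hsq : Real.sqrt u ≤ Real.sqrt (Real.log (1 + Real.exp (-t))) :=
    Real.sqrt_le_sqrt hflog
  set s : ℝ := Real.sqrt u with hs
  have hs0 : 0 ≤ s := Real.sqrt_nonneg u
  have hs2 : s ^ 2 = u := Real.sq_sqrt hu0.le
  set r : ℝ := Real.sqrt 3 with hr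
  have hr0 : 0 < r := Real.sqrt_pos.mpr (by norm_num)
  have hr2 : r ^ 2 = 3 := Real.sq_sqrt (by norm_num)
  have hmain : u * (1 - u) ≤ (2 / (3 * r)) * s := by
    have hfact : 0 ≤ s * ((r * s - 1) ^ 2 * (r * s + 2)) := by positivity
    have h3r : (0:ℝ) < 3 * r := by linarith
    have hexp : s * ((r * s - 1) ^ 2 * (r * s + 2)) = 3*r*s^4 - 3*r*s^2 + 2*s := by
      linear_combination (r * s ^ 4) * hr2
    have hdiv : u * (1 - u) ≤ (2 * s) / (3 * r) := by
      refine (le_div_iff₀ h3r).mpr ?_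
      rw [← hs2]
      nlinarith [hfact, hexp]
    have heq : 2 / (3 * r) * s = (2 * s) / (3 * r) := by ring
    linarith
  calc Lg' t = u * (1 - u) := hLg'
    _ ≤ (2 / (3 * r)) * s := hmain
    _ ≤ (2 / (3 * r)) * Real.sqrt (Real.log (1 + Real.exp (-t))) := by
        apply mul_le_mul_of_nonneg_left hsq; positivity

/-- for the logistic function `f(x) = log(1 + e^{−⟨a,x⟩})` with
`a ≠ 0`, `inf f = 0` and the directional curvature is bounded by
`(2/(3√3))‖a‖²√(f(x))`. -/
theorem logistic_directional_smoothness {d : ℕ}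
    (a : EuclideanSpace ℝ (Fin d)) (ha : a ≠ 0)
    (f : EuclideanSpace ℝ (Fin d) → ℝ)
    (hf : ∀ x, f x = Real.log (1 + Real.exp (-⟪a, x⟫))) :
    (⨅ x, f x) = 0 ∧
    (∀ x : EuclideanSpace ℝ (Fin d),
      ⟪gradient f x, fderiv ℝ (gradient f) x (gradient f x)⟫ / ‖gradient f x‖^2
        ≤ (2 / (3 * Real.sqrt 3)) * ‖a‖^2 * Real.sqrt (f x)) := by
  have hfeq : f = Lfun ∘ (fun y : EuclideanSpace ℝ (Fin d) => ⟪a, y⟫) :=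
    funext fun y => hf y
  have hna : (0:ℝ) < ‖a‖ := norm_pos_iff.mpr ha
  have hlb : ∀ x, 0 ≤ f x := by
    intro x; rw [hf]
    exact Real.log_nonneg (by linarith [Real.exp_pos (-⟪a, x⟫)])
  constructor
  · refine le_antisymm ?_ (le_ciInf hlb)
    have : ∀ ε : ℝ, 0 < ε → (⨅ x, f x) ≤ 0 + ε := by
      intro ε hε
      set t : ℝ := (-Real.log ε) / ‖a‖ ^ 2 with ht
      set x : EuclideanSpace ℝ (Fin d) := t • a with hx
      have hbdd : BddBelow (Set.range f) := by
        refine ⟨0, ?_⟩; rintro _ ⟨y, rfl⟩; exact hlb y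
      have hinner : ⟪a, x⟫ = -Real.log ε := by
        rw [hx, real_inner_smul_right, real_inner_self_eq_norm_sq, ht]
        field_simp
      have hfx : f x ≤ ε := by
        rw [hf, hinner, neg_neg, Real.exp_log hε]
        have := Real.log_le_sub_one_of_pos (x := 1 + ε) (by linarith)
        linarith
      calc (⨅ x, f x) ≤ f x := ciInf_le hbdd x
        _ ≤ ε := hfx
        _ = 0 + ε := (zero_add ε).symm
    exact le_of_forall_pos_le_add this
  · intro x
    -- the gradient
    have hgrad : ∀ y : EuclideanSpace ℝ (Fin d), HasGradientAt f (Lg ⟪a, y⟫ • a) y := by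
      intro y
      rw [hasGradientAt_iff_hasFDerivAt]
      have hinner : HasFDerivAt (fun z : EuclideanSpace ℝ (Fin d) => ⟪a, z⟫)
          (innerSL ℝ a) y := (innerSL ℝ a).hasFDerivAt
      have hc := (hasDerivAt_Lfun ⟪a, y⟫).comp_hasFDerivAt y hinner
      have hmap : (InnerProductSpace.toDual ℝ (EuclideanSpace ℝ (Fin d)) (Lg ⟪a, y⟫ • a))
          = Lg ⟪a, y⟫ • innerSL ℝ a := by
        ext v
        simp [real_inner_smul_left]
      rw [hfeq, hmap]
      exact hc
    have hgradf : gradient f = fun y : EuclideanSpace ℝ (Fin d) => Lg ⟪a, y⟫ • a :=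
      gradient_eq hgrad
    -- the Hessian as fderiv of the gradient
    have hHess : HasFDerivAt (fun y : EuclideanSpace ℝ (Fin d) => Lg ⟪a, y⟫ • a)
        (((Lg' ⟪a, x⟫) • innerSL ℝ a).smulRight a) x := by
      have hc := (hasDerivAt_Lg ⟪a, x⟫).comp_hasFDerivAt x (innerSL ℝ a).hasFDerivAt
      exact hc.smul_const a
    have hfd : fderiv ℝ (gradient f) x = ((Lg' ⟪a, x⟫) • innerSL ℝ a).smulRight a := by
      rw [hgradf]; exact hHess.fderiv
    set s : ℝ := ⟪a, x⟫ with hsdef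
    have hLgneg : Lg s < 0 := by
      have := Real.exp_pos (-s)
      have := hden_pos s
      rw [Lg]; simp only [neg_neg, Left.neg_neg_iff]
      positivity
    have hLgne : Lg s ≠ 0 := ne_of_lt hLgneg
    have hval : ⟪gradient f x, fderiv ℝ (gradient f) x (gradient f x)⟫
        = Lg s ^ 2 * Lg' s * ‖a‖ ^ 4 := by
      rw [hfd, hgradf]
      simp only [ContinuousLinearMap.smulRight_apply, ContinuousLinearMap.smul_apply,
        innerSL_apply_apply, real_inner_smul_right, real_inner_smul_left,
        real_inner_self_eq_norm_sq, smul_eq_mul, smul_smul]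
      ring
    have hnorm : ‖gradient f x‖ ^ 2 = Lg s ^ 2 * ‖a‖ ^ 2 := by
      rw [hgradf]
      simp only [norm_smul, Real.norm_eq_abs, mul_pow, sq_abs]
      rfl
    rw [hval, hnorm]
    have hratio : Lg s ^ 2 * Lg' s * ‖a‖ ^ 4 / (Lg s ^ 2 * ‖a‖ ^ 2) = Lg' s * ‖a‖ ^ 2 := by
      field_simp
    rw [hratio, hf]
    have := key_scalar s
    nlinarith [sq_nonneg ‖a‖, this, Real.sqrt_nonneg (Real.log (1 + Real.exp (-s)))]
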